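/- Equivalence of oscillations around the mean and around the power of the mean (estimate (eq:gamma1) of the paper): Let a > 1/2. There exist constants 0 < c ≤ C, depending only on a, such that for every measure space (X, μ) with 0 < μ(X) < ∞ and every measurable f : X → [0,∞) with f ∈ L¹(μ) and f^a ∈ L²(μ), writing ⟨h⟩ = μ(X)^{−1} ∫_X h dμ for the average, one has c ∫_X |f^a − ⟨f^a⟩|² dμ ≤ ∫_X |f^a − ⟨f⟩^a|² dμ ≤ C ∫_X |f^a − ⟨f^a⟩|² dμ. -/

import Mathlib

open MeasureTheory Set
open Real

noncomputable section


lemma osc_aux_mid (b : ℝ) (hb0 : 0 < b) (hb1 : b ≤ 1) {u : ℝ} (hu1 : (1:ℝ)/2 ≤ u) (hu2 : u ≤ 2) :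
    1 + b*(u-1) ≤ u ^ b + 4*(u-1)^2 := by
  set ψ : ℝ → ℝ := fun u => u ^ b + 4*(u-1)^2 - 1 - b*(u-1) with hψ
  set ψ' : ℝ → ℝ := fun u => b * u ^ (b-1) + 8*(u-1) - b with hψ'
  have hne : ∀ x : ℝ, (1:ℝ)/2 ≤ x → x ≠ 0 := by intro x h1 h; rw [h] at h1; norm_num at h1
  have hderiv : ∀ x ∈ Icc ((1:ℝ)/2) 2, HasDerivAt ψ (ψ' x) x := by
    intro x hx
    have h1 : HasDerivAt (fun u : ℝ => u ^ b) (b * x ^ (b-1)) x :=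
      Real.hasDerivAt_rpow_const (Or.inl (hne x hx.1))
    have h2 : HasDerivAt (fun u : ℝ => 4*(u-1)^2) (8*(x-1)) x := by
      have h : HasDerivAt (fun u : ℝ => (u-1)^2) (2*(x-1)^1 * 1) x :=
        ((hasDerivAt_id' x).sub_const 1).pow 2
      have h' := h.const_mul 4
      rw [show (8*(x-1)) = 4*(2*(x-1)^1*1) by ring]
      exact h'
    have h3 : HasDerivAt (fun u : ℝ => b*(u-1)) (b * 1) x :=
      ((hasDerivAt_id' x).sub_const 1).const_mul b
    have h4 := ((h1.add h2).sub_const 1).sub h3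
    have h5 : ψ' x = b * x ^ (b-1) + 8*(x-1) - b * 1 := by simp [hψ']
    rw [h5]
    exact h4
  have hderiv' : ∀ x ∈ Icc ((1:ℝ)/2) 2, HasDerivAt ψ' (b * ((b-1) * x ^ (b-2)) + 8) x := by
    intro x hx
    have h1 : HasDerivAt (fun u : ℝ => u ^ (b-1)) ((b-1) * x ^ (b-1-1)) x :=
      Real.hasDerivAt_rpow_const (Or.inl (hne x hx.1))
    have h2 := (h1.const_mul b).add (((hasDerivAt_id' x).sub_const 1).const_mul 8)
    have h3 := h2.sub_const b
    have h5 : b * ((b-1) * x ^ (b-2)) + 8 = b * ((b-1) * x ^ (b-1-1)) + 8 * 1 := by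
      rw [show b - 2 = b - 1 - 1 by ring]; ring
    rw [h5]
    exact h3
  have hψ'cont : ContinuousOn ψ' (Icc ((1:ℝ)/2) 2) :=
    fun x hx => ((hderiv' x hx).continuousAt).continuousWithinAt
  have hψcont : ContinuousOn ψ (Icc ((1:ℝ)/2) 2) :=
    fun x hx => ((hderiv x hx).continuousAt).continuousWithinAt
  have hsecond : ∀ x ∈ Icc ((1:ℝ)/2) 2, 0 ≤ b * ((b-1) * x ^ (b-2)) + 8 := by
    intro x hx
    have hxpos : (0:ℝ) < x := lt_of_lt_of_le (by norm_num) hx.1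
    have hxb : x ^ (b-2) ≤ 8 := by
      rw [Real.rpow_sub hxpos, div_le_iff₀ (Real.rpow_pos_of_pos hxpos 2)]
      have h1 : x ^ b ≤ 2 := by
        calc x ^ b ≤ 2 ^ b := Real.rpow_le_rpow (le_of_lt hxpos) hx.2 (le_of_lt hb0)
          _ ≤ 2 ^ (1:ℝ) := Real.rpow_le_rpow_of_exponent_le (by norm_num) hb1
          _ = 2 := Real.rpow_one 2
      have h2 : (1:ℝ)/4 ≤ x ^ (2:ℝ) := by
        rw [show ((2:ℝ)) = ((2:ℕ):ℝ) by norm_num, Real.rpow_natCast]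
        nlinarith [hx.1]
      nlinarith
    have hbb : b * (1-b) ≤ 1/4 := by nlinarith [sq_nonneg (2*b-1)]
    have hxb0 : 0 ≤ x ^ (b-2) := Real.rpow_nonneg (le_of_lt hxpos) _
    nlinarith
  have hmono : MonotoneOn ψ' (Icc ((1:ℝ)/2) 2) := by
    apply monotoneOn_of_deriv_nonneg (convex_Icc _ _) hψ'cont
    · intro x hx
      exact ((hderiv' x (interior_subset hx)).differentiableAt).differentiableWithinAt
    · intro x hx
      rw [interior_Icc] at hx
      rw [(hderiv' x ⟨le_of_lt hx.1, le_of_lt hx.2⟩).deriv]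
      exact hsecond x ⟨le_of_lt hx.1, le_of_lt hx.2⟩
  have hψ'1 : ψ' 1 = 0 := by simp [hψ']
  have h1mem : (1:ℝ) ∈ Icc ((1:ℝ)/2) 2 := by norm_num
  have hψ1 : ψ 1 = 0 := by simp [hψ]
  have key : 0 ≤ ψ u := by
    rcases le_total u 1 with h | h
    · have hanti : AntitoneOn ψ (Icc ((1:ℝ)/2) 1) := by
        apply antitoneOn_of_deriv_nonpos (convex_Icc _ _)
          (hψcont.mono (Icc_subset_Icc le_rfl (by norm_num)))
        · intro x hx
          rw [interior_Icc] at hx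
          have hx' : x ∈ Icc ((1:ℝ)/2) 2 := ⟨le_of_lt hx.1, by linarith [hx.2]⟩
          exact ((hderiv x hx').differentiableAt).differentiableWithinAt
        · intro x hx
          rw [interior_Icc] at hx
          have hx' : x ∈ Icc ((1:ℝ)/2) 2 := ⟨le_of_lt hx.1, by linarith [hx.2]⟩
          rw [(hderiv x hx').deriv]
          have := hmono hx' h1mem (le_of_lt hx.2)
          linarith [hψ'1 ▸ this]
      have := hanti ⟨hu1, h⟩ ⟨by norm_num, le_rfl⟩ h
      rw [hψ1] at this; exact this
    · have hmono2 : MonotoneOn ψ (Icc (1:ℝ) 2) := by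
        apply monotoneOn_of_deriv_nonneg (convex_Icc _ _)
          (hψcont.mono (Icc_subset_Icc (by norm_num) le_rfl))
        · intro x hx
          rw [interior_Icc] at hx
          have hx' : x ∈ Icc ((1:ℝ)/2) 2 := ⟨by linarith [hx.1], le_of_lt hx.2⟩
          exact ((hderiv x hx').differentiableAt).differentiableWithinAt
        · intro x hx
          rw [interior_Icc] at hx
          have hx' : x ∈ Icc ((1:ℝ)/2) 2 := ⟨by linarith [hx.1], le_of_lt hx.2⟩
          rw [(hderiv x hx').deriv]
          have := hmono h1mem hx' (le_of_lt hx.1)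
          linarith [hψ'1 ▸ this]
      have := hmono2 ⟨le_rfl, by norm_num⟩ ⟨h, hu2⟩ h
      rw [hψ1] at this; exact this
  simp only [hψ] at key; linarith

lemma osc_aux_ptwise (b : ℝ) (hb0 : 0 < b) (hb2 : b ≤ 2) {u : ℝ} (hu : 0 ≤ u) :
    1 + b*(u-1) - 4*(u-1)^2 ≤ u ^ b := by
  rcases le_or_gt 1 b with hb | hb
  · have h := one_add_mul_self_le_rpow_one_add (s := u - 1) (by linarith) hb
    simp only [add_sub_cancel] at h
    nlinarith [sq_nonneg (u-1)]
  · rcases le_or_gt u (1/2) with h | h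
    · have : (u-1)^2 ≥ 1/4 := by nlinarith
      have : b*(u-1) ≤ 0 := mul_nonpos_of_nonneg_of_nonpos (le_of_lt hb0) (by linarith)
      have := Real.rpow_nonneg hu b
      nlinarith
    · rcases le_or_gt u 2 with h2 | h2
      · have := osc_aux_mid b hb0 (le_of_lt hb) (le_of_lt h) h2
        linarith
      · have : b*(u-1) ≤ u - 1 := by nlinarith
        have := Real.rpow_nonneg hu b
        nlinarith


set_option maxHeartbeats 1000000 in
lemma osc_aux_key (a : ℝ) (ha : 1/2 < a) :
    ∀ (X : Type*) [MeasurableSpace X] (ν : Measure X) [IsProbabilityMeasure ν]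
      (g : X → ℝ), (∀ x, 0 ≤ g x) →
      Integrable (fun x => g x ^ (1/a)) ν → MemLp g 2 ν →
      (∫ x, (g x - ∫ y, g y ∂ν)^2 ∂ν) ≤ (∫ x, (g x - (∫ y, g y ^ (1/a) ∂ν) ^ a)^2 ∂ν) ∧
      (∫ x, (g x - (∫ y, g y ^ (1/a) ∂ν) ^ a)^2 ∂ν)
        ≤ (1 + max ((max a 1)^2) 16) * ∫ x, (g x - ∫ y, g y ∂ν)^2 ∂ν := by
  have ha0 : 0 < a := by linarith
  set A := max a 1 with hA
  set K := max (A^2) 16 with hK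
  have hA1 : 1 ≤ A := le_max_right _ _
  have hK16 : (16:ℝ) ≤ K := le_max_right _ _
  have hKA : A^2 ≤ K := le_max_left _ _
  intro X _ ν _ g hgpos hgb hg2
  set b := 1/a with hbdef
  have hb0 : 0 < b := by positivity
  have hb2 : b ≤ 2 := by rw [hbdef]; rw [div_le_iff₀ ha0]; linarith
  have hgi : Integrable g ν := hg2.integrable (by norm_num)
  have hgsq : Integrable (fun x => g x ^ 2) ν := hg2.integrable_sq
  set m := ∫ y, g y ∂ν with hm
  set s := ∫ y, g y ^ b ∂ν with hs
  set Q := ∫ x, g x ^ 2 ∂ν with hQdef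
  have hm0 : 0 ≤ m := integral_nonneg hgpos
  have hs0 : 0 ≤ s := integral_nonneg (fun x => Real.rpow_nonneg (hgpos x) _)
  have hQ0 : 0 ≤ Q := integral_nonneg (fun x => sq_nonneg _)
  have pyth : ∀ t : ℝ, ∫ x, (g x - t)^2 ∂ν = Q - 2*t*m + t^2 := by
    intro t
    have h1 : ∀ x, (g x - t)^2 = (g x^2 - (2*t)*g x) + t^2 := fun x => by ring
    simp_rw [h1]
    have i1 : Integrable (fun x => g x^2 - 2*t*g x) ν := by
      exact hgsq.sub (hgi.const_mul (2*t))
    rw [integral_add i1 (integrable_const _),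
      integral_sub hgsq (hgi.const_mul _), integral_const_mul _ _, integral_const]
    simp [measure_univ]
    try ring
  set V := ∫ x, (g x - m)^2 ∂ν with hVdef
  have hV0 : 0 ≤ V := integral_nonneg (fun x => sq_nonneg _)
  have hV : V = Q - m^2 := by rw [hVdef, pyth m]; ring
  clear_value A K
  constructor
  · rw [hVdef, pyth m, pyth (s^a)]
    nlinarith [sq_nonneg (m - s^a)]
  -- Jensen: s ≤ Q ^ (b/2)
  have hcomp : ∀ x : X, (g x ^ 2) ^ (b/2) = g x ^ b := by
    intro x
    have h2 : ((2:ℕ):ℝ) * (b/2) = b := by push_cast; ring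
    rw [← Real.rpow_natCast (g x) 2, ← Real.rpow_mul (hgpos x), h2]
  have hsQ : s ≤ Q ^ (b/2) := by
    have hjen := ConcaveOn.le_map_integral (μ := ν) (s := Ici (0:ℝ))
      (g := fun t : ℝ => t ^ (b/2)) (f := fun x => g x ^ 2)
      (Real.concaveOn_rpow (by positivity) (by linarith))
      ((Real.continuous_rpow_const (by positivity)).continuousOn) isClosed_Ici
      (Filter.Eventually.of_forall (fun x => sq_nonneg (g x))) hgsq
      (by
        have : ((fun t : ℝ => t ^ (b/2)) ∘ fun x => g x ^ 2) = fun x => g x ^ b := by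
          funext x; simp only [Function.comp]; exact hcomp x
        rw [this]; exact hgb)
    simp only [hcomp] at hjen
    exact hjen
  have hsa_up : s ^ a ≤ Real.sqrt V + m := by
    have h1 : s ^ a ≤ (Q ^ (b/2)) ^ a := Real.rpow_le_rpow hs0 hsQ (le_of_lt ha0)
    have h2 : (Q ^ (b/2)) ^ a = Q ^ ((1:ℝ)/2) := by
      rw [← Real.rpow_mul hQ0]
      congr 1
      rw [hbdef]; field_simp
    have h3 : Q ^ ((1:ℝ)/2) = Real.sqrt Q := (Real.sqrt_eq_rpow Q).symm
    have h4 : Real.sqrt Q ≤ Real.sqrt V + m := by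
      have h5 : Q ≤ (Real.sqrt V + m)^2 := by
        nlinarith [Real.sq_sqrt hV0, Real.sqrt_nonneg V]
      calc Real.sqrt Q ≤ Real.sqrt ((Real.sqrt V + m)^2) := Real.sqrt_le_sqrt h5
        _ = Real.sqrt V + m := Real.sqrt_sq (by positivity)
    calc s ^ a ≤ (Q ^ (b/2)) ^ a := h1
      _ = Q ^ ((1:ℝ)/2) := h2
      _ = Real.sqrt Q := h3
      _ ≤ Real.sqrt V + m := h4
  have hgap : (m - s^a)^2 ≤ K * V := by
    rcases eq_or_lt_of_le hm0 with hmz | hmpos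
    · -- m = 0 : g = 0 a.e.
      have hae : g =ᵐ[ν] 0 := (integral_eq_zero_iff_of_nonneg hgpos hgi).mp hmz.symm
      have hsz : s = 0 := by
        rw [hs]
        rw [integral_eq_zero_iff_of_nonneg_ae ?h1 ?h2]
        case h1 => exact Filter.Eventually.of_forall fun x => Real.rpow_nonneg (hgpos x) _
        case h2 => exact hgb
        filter_upwards [hae] with x hx
        simp only [Pi.zero_apply] at hx ⊢
        rw [hx, Real.zero_rpow (ne_of_gt hb0)]
      rw [hsz, Real.zero_rpow (ne_of_gt ha0), ← hmz]
      simpa using mul_nonneg (le_trans (by norm_num : (0:ℝ) ≤ 16) hK16) hV0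
    · -- m > 0
      have hmne : m ≠ 0 := ne_of_gt hmpos
      have hs_low : m ^ b * (1 - 4*(V/m^2)) ≤ s := by
        have hpt : ∀ x, m^b*(1-b-4) + (m^b*(b+8)/m) * g x + (-(4*m^b)/m^2) * (g x)^2
            ≤ g x ^ b := by
          intro x
          have hu := osc_aux_ptwise b hb0 hb2 (u := g x / m) (div_nonneg (hgpos x) hm0)
          have hdiv : (g x / m)^b = g x ^ b / m ^ b := Real.div_rpow (hgpos x) (le_of_lt hmpos) b
          have hmb : (0:ℝ) < m ^ b := Real.rpow_pos_of_pos hmpos b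
          rw [hdiv] at hu
          have := mul_le_mul_of_nonneg_left hu (le_of_lt hmb)
          rw [mul_div_cancel₀ _ (ne_of_gt hmb)] at this
          calc m^b*(1-b-4) + (m^b*(b+8)/m) * g x + (-(4*m^b)/m^2) * (g x)^2
              = m^b * (1 + b*(g x/m - 1) - 4*(g x/m - 1)^2) := by field_simp; ring
            _ ≤ g x ^ b := this
        have hint : Integrable (fun x => m^b*(1-b-4) + (m^b*(b+8)/m) * g x
            + (-(4*m^b)/m^2) * (g x)^2) ν :=
          ((integrable_const _).add (hgi.const_mul _)).add (hgsq.const_mul _)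
        have hmono := integral_mono hint hgb hpt
        have hcalc : ∫ x, (m^b*(1-b-4) + (m^b*(b+8)/m) * g x + (-(4*m^b)/m^2) * (g x)^2) ∂ν
            = m^b*(1-b-4) + (m^b*(b+8)/m) * m + (-(4*m^b)/m^2) * Q := by
          have i2 : Integrable (fun x => m^b*(1-b-4) + (m^b*(b+8)/m) * g x) ν := by
            exact (integrable_const _).add (hgi.const_mul _)
          rw [integral_add i2 (hgsq.const_mul _),
            integral_add (integrable_const _) (hgi.const_mul _), integral_const_mul _ _,
            integral_const_mul _ _, integral_const]
          simp only [measure_univ, probReal_univ, ENNReal.toReal_one, smul_eq_mul, one_mul, one_smul]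
          rw [integral_const_mul _ _]
        rw [hcalc] at hmono
        refine le_trans (le_of_eq ?_) hmono
        rw [hV]
        field_simp
        ring
      -- endgame
      have hsqV := Real.sq_sqrt hV0
      have hsV0 := Real.sqrt_nonneg V
      rcases le_or_gt (m^2) (16*V) with hcase | hcase
      · have hm4 : m ≤ 4 * Real.sqrt V := by nlinarith
        have h1 : m - s^a ≤ 4 * Real.sqrt V := by
          have := Real.rpow_nonneg hs0 a
          linarith
        have h2 : -(Real.sqrt V) ≤ m - s^a := by linarith [hsa_up]
        have hprod := mul_nonneg (sub_nonneg.2 h1) (by linarith : (0:ℝ) ≤ (m - s^a) + Real.sqrt V)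
        have h5 : (m - s^a)^2 ≤ 16*V := by nlinarith [hprod, hsqV]
        have h6 : 0 ≤ (K-16)*V := mul_nonneg (by linarith) hV0
        nlinarith [h5, h6]
      · set δ := 4*(V/m^2) with hδ
        clear_value δ
        have hδ0 : 0 ≤ δ := by rw [hδ]; positivity
        have hδ4 : δ < 1/4 := by
          have hm2 : (0:ℝ) < m^2 := pow_pos hmpos 2
          have h5 : V/m^2 < 1/16 := by
            rw [div_lt_iff₀ hm2]; nlinarith
          rw [hδ]; linarith
        have hmb : (0:ℝ) < m ^ b := Real.rpow_pos_of_pos hmpos b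
        have hsa_low : m * (1 - A*δ) ≤ s ^ a := by
          have h1 : (m ^ b * (1 - δ)) ^ a ≤ s ^ a :=
            Real.rpow_le_rpow (by nlinarith) hs_low (le_of_lt ha0)
          have h2 : (m ^ b * (1 - δ)) ^ a = m * (1-δ)^a := by
            rw [Real.mul_rpow (le_of_lt hmb) (by linarith)]
            congr 1
            rw [hbdef, one_div, Real.rpow_inv_rpow hm0 (ne_of_gt ha0)]
          have h3 : 1 - A*δ ≤ (1-δ)^a := by
            rcases le_or_gt 1 a with h | h
            · have := one_add_mul_self_le_rpow_one_add (s := -δ) (by linarith) h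
              have hAa : A = a := hA.trans (max_eq_left h)
              rw [hAa]
              calc 1 - a*δ = 1 + a * (-δ) := by ring
                _ ≤ (1 + -δ)^a := this
                _ = (1-δ)^a := by ring_nf
            · have h4 : (1-δ)^(1:ℝ) ≤ (1-δ)^a :=
                Real.rpow_le_rpow_of_exponent_ge (by linarith) (by linarith) (le_of_lt h)
              rw [Real.rpow_one] at h4
              nlinarith
          calc m * (1 - A*δ) ≤ m * (1-δ)^a := by
                apply mul_le_mul_of_nonneg_left h3 hm0
            _ = (m ^ b * (1 - δ)) ^ a := h2.symm
            _ ≤ s ^ a := h1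
        have hup : m - s^a ≤ A * Real.sqrt V := by
          have h1 : m - s^a ≤ m * A * δ := by nlinarith
          have h2 : m * A * δ = 4 * A * (V / m) := by rw [hδ]; field_simp
          have h3 : 4 * (V / m) ≤ Real.sqrt V := by
            have h4 : 4 * Real.sqrt V ≤ m := by nlinarith
            have h5 : V / m ≤ Real.sqrt V / 4 := by
              rw [div_le_div_iff₀ hmpos (by norm_num : (0:ℝ) < 4)]
              nlinarith
            linarith
          have hA0 : (0:ℝ) < A := by linarith
          calc m - s^a ≤ 4 * A * (V/m) := by rw [← h2]; exact h1
            _ = A * (4 * (V/m)) := by ring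
            _ ≤ A * Real.sqrt V := by apply mul_le_mul_of_nonneg_left h3 (le_of_lt hA0)
        have hdown : -(A * Real.sqrt V) ≤ m - s^a := by
          have : Real.sqrt V ≤ A * Real.sqrt V := by nlinarith
          linarith [hsa_up]
        nlinarith [sq_nonneg A]
  -- conclude
  rw [hVdef, pyth m, pyth (s^a)]
  have hfin : Q - 2*(s^a)*m + (s^a)^2 = (Q - 2*m*m + m^2) + (m - s^a)^2 := by ring
  rw [hfin]
  have hVeq : Q - 2*m*m + m^2 = V := by rw [hV]; ring
  rw [hVeq]
  nlinarith [hgap, hV0, hK16]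


/-- Equivalence of oscillations around the mean and around the power of the mean:
for `a > 1/2` there are constants `0 < c ≤ C` depending only on `a` such that for every
finite measure space and every nonnegative `f ∈ L¹` with `f^a ∈ L²`,
`c ∫ |f^a − ⟨f^a⟩|² ≤ ∫ |f^a − ⟨f⟩^a|² ≤ C ∫ |f^a − ⟨f^a⟩|²`. -/
theorem oscillation_power_mean_equiv (a : ℝ) (ha : 1/2 < a) :
    ∃ c C : ℝ, 0 < c ∧ c ≤ C ∧
      ∀ (X : Type*) [MeasurableSpace X] (μ : Measure X),
        0 < μ univ → μ univ < ⊤ →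
        ∀ f : X → ℝ, Measurable f → (∀ x, 0 ≤ f x) →
          Integrable f μ → MemLp (fun x => f x ^ a) 2 μ →
          (c * ∫ x, (f x ^ a - (μ univ).toReal⁻¹ * ∫ y, f y ^ a ∂μ) ^ 2 ∂μ)
              ≤ (∫ x, (f x ^ a - ((μ univ).toReal⁻¹ * ∫ y, f y ∂μ) ^ a) ^ 2 ∂μ) ∧
          (∫ x, (f x ^ a - ((μ univ).toReal⁻¹ * ∫ y, f y ∂μ) ^ a) ^ 2 ∂μ)
              ≤ C * ∫ x, (f x ^ a - (μ univ).toReal⁻¹ * ∫ y, f y ^ a ∂μ) ^ 2 ∂μ := by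
  have ha0 : 0 < a := by linarith
  have hkey := osc_aux_key a ha
  have hC1 : (1:ℝ) ≤ 1 + max ((max a 1)^2) 16 := by
    have h16 : (16:ℝ) ≤ max ((max a 1)^2) 16 := le_max_right _ _
    linarith
  refine ⟨1, 1 + max ((max a 1)^2) 16, one_pos, hC1, ?_⟩
  intro X _ μ hμ0 hμtop f hf hfpos hfi hfa
  haveI : IsFiniteMeasure μ := ⟨hμtop⟩
  haveI : NeZero μ := ⟨by intro h; rw [h] at hμ0; simp at hμ0⟩
  set ν := (μ univ)⁻¹ • μ with hν
  haveI : IsProbabilityMeasure ν := isProbabilityMeasureSMul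
  set τ := (μ univ).toReal with hτ
  have hτpos : 0 < τ := ENNReal.toReal_pos (ne_of_gt hμ0) (ne_of_lt hμtop)
  have hinv_ne_top : (μ univ)⁻¹ ≠ ⊤ := ENNReal.inv_ne_top.2 (ne_of_gt hμ0)
  have hconv : ∀ h : X → ℝ, ∫ x, h x ∂ν = τ⁻¹ * ∫ x, h x ∂μ := by
    intro h
    rw [hν, integral_smul_measure, ENNReal.toReal_inv, smul_eq_mul, hτ]
  have hfg : (fun x => (f x ^ a) ^ (1/a)) = f := by
    funext x
    rw [one_div, Real.rpow_rpow_inv (hfpos x) (ne_of_gt ha0)]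
  have hgpos : ∀ x, 0 ≤ f x ^ a := fun x => Real.rpow_nonneg (hfpos x) a
  have hgb : Integrable (fun x => (f x ^ a) ^ (1/a)) ν := by
    rw [hfg]; exact hfi.smul_measure hinv_ne_top
  have hg2 : MemLp (fun x => f x ^ a) 2 ν := hfa.smul_measure hinv_ne_top
  obtain ⟨hlow, hup⟩ := hkey X ν (fun x => f x ^ a) hgpos hgb hg2
  have e3 : ∀ t : ℝ, ∫ x, (f x ^ a - t)^2 ∂μ = τ * ∫ x, (f x ^ a - t)^2 ∂ν := by
    intro t
    rw [hconv (fun x => (f x ^ a - t)^2), ← mul_assoc, mul_inv_cancel₀ (ne_of_gt hτpos), one_mul]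
  have hgoal1 : τ⁻¹ * ∫ y, f y ^ a ∂μ = ∫ y, f y ^ a ∂ν := (hconv _).symm
  have hgoal2 : (τ⁻¹ * ∫ y, f y ∂μ) ^ a = (∫ y, (f y ^ a) ^ (1/a) ∂ν) ^ a := by
    rw [hfg, hconv]
  rw [hgoal1, hgoal2, e3, e3]
  constructor
  · rw [one_mul]
    exact mul_le_mul_of_nonneg_left hlow (le_of_lt hτpos)
  · calc τ * ∫ x, (f x ^ a - (∫ y, (f y ^ a) ^ (1/a) ∂ν) ^ a)^2 ∂ν
        ≤ τ * ((1 + max ((max a 1)^2) 16) * ∫ x, (f x ^ a - ∫ y, f y ^ a ∂ν)^2 ∂ν) :=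
          mul_le_mul_of_nonneg_left hup (le_of_lt hτpos)
      _ = (1 + max ((max a 1)^2) 16) * (τ * ∫ x, (f x ^ a - ∫ y, f y ^ a ∂ν)^2 ∂ν) := by ring
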